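/- Let φ ∈ L¹(ℝ²) ∩ L²(ℝ²) and let k, l ∈ ℤ. Then for a.e. ξ, ξ' ∈ [0,1) and η ∈ ℝ, the Weyl–Zak transform of the twisted translate satisfies Z_W (T^t_{(k,l)} φ)(ξ, ξ', η) = e^{2πi(k ξ + l ξ')} e^{πi k l} Z_W φ(ξ, ξ', η). -/

import Mathlib

open MeasureTheory Complex

noncomputable section

/-- The `λ`-twisted translation `(T^t_{(k,l)})^λ f (x,y) = e^{πiλ(xl - yk)} f(x-k, y-l)`. -/
def twistedTranslate (lam : ℝ) (k l : ℤ) (f : ℝ × ℝ → ℂ) : ℝ × ℝ → ℂ :=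
  fun p => Complex.exp ((↑(Real.pi * lam * (p.1 * l - p.2 * k)) : ℂ) * Complex.I) *
    f (p.1 - k, p.2 - l)

/-- The dilation `D_a f (x,y) = a f(ax, ay)`. -/
def dilate (a : ℝ) (f : ℝ × ℝ → ℂ) : ℝ × ℝ → ℂ :=
  fun p => (a : ℂ) * f (a * p.1, a * p.2)

/-- The kernel `K^λ_g(ξ,η) = ∫_ℝ g(x, η-ξ) e^{πiλx(η+ξ)} dx` of the Weyl transform `W_λ(g)`. -/
def weylKernel (lam : ℝ) (g : ℝ × ℝ → ℂ) (ξ η : ℝ) : ℂ :=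
  ∫ x : ℝ, g (x, η - ξ) * Complex.exp ((↑(Real.pi * lam * x * (η + ξ)) : ℂ) * Complex.I)

/-- The Weyl–Zak transform `Z_W φ(ξ, ξ', η) = Σ_{m∈ℤ} K_φ(m + ξ, η) e^{-2πimξ'}`. -/
def weylZak (φ : ℝ × ℝ → ℂ) (ξ ξ' η : ℝ) : ℂ :=
  ∑' m : ℤ, weylKernel 1 φ (m + ξ) η *
    Complex.exp (-(↑(2 * Real.pi * (m : ℝ) * ξ') : ℂ) * Complex.I)

lemma exp_I_add (a b : ℝ) :
    Complex.exp ((↑(a+b):ℂ) * I) = Complex.exp ((a:ℂ) * I) * Complex.exp ((b:ℂ) * I) := by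
  rw [← Complex.exp_add]; push_cast; ring_nf

lemma exp_period (a b : ℝ) (n : ℤ) (h : a = b + 2 * Real.pi * n) :
    Complex.exp ((a:ℂ) * I) = Complex.exp ((b:ℂ) * I) := by
  have : ((a:ℂ) * I) = (b:ℂ) * I + (n:ℂ) * (2 * Real.pi * I) := by
    rw [show (a:ℂ) = (b:ℂ) + 2 * Real.pi * n by exact_mod_cast congrArg Complex.ofReal h]
    ring
  rw [this, Complex.exp_add, Complex.exp_int_mul_two_pi_mul_I, mul_one]

lemma exp3_helper (a1 a2 a3 b1 b2 b3 : ℝ) (n : ℤ)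
    (h : a1 + a2 - a3 = b1 + b2 - b3 + 2 * Real.pi * n) (K : ℂ) :
    Complex.exp ((a1:ℂ) * I) * Complex.exp ((a2:ℂ) * I) * K * Complex.exp (-(a3:ℂ) * I) =
      Complex.exp ((b1:ℂ) * I) * Complex.exp ((b2:ℂ) * I) *
        (K * Complex.exp (-(b3:ℂ) * I)) := by
  have ha : Complex.exp ((a1:ℂ) * I) * Complex.exp ((a2:ℂ) * I) * Complex.exp (-(a3:ℂ) * I)
      = Complex.exp ((↑(a1 + a2 - a3) : ℂ) * I) := by
    rw [← Complex.exp_add, ← Complex.exp_add]; push_cast; ring_nf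
  have hb : Complex.exp ((b1:ℂ) * I) * Complex.exp ((b2:ℂ) * I) * Complex.exp (-(b3:ℂ) * I)
      = Complex.exp ((↑(b1 + b2 - b3) : ℂ) * I) := by
    rw [← Complex.exp_add, ← Complex.exp_add]; push_cast; ring_nf
  have hp : Complex.exp ((↑(a1 + a2 - a3) : ℂ) * I) = Complex.exp ((↑(b1 + b2 - b3) : ℂ) * I) :=
    exp_period _ _ n h
  linear_combination K * ha - K * hb + K * hp

lemma kernel_twist (φ : ℝ × ℝ → ℂ) (k l : ℤ) (ξ η : ℝ) :
    weylKernel 1 (twistedTranslate 1 k l φ) ξ η =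
      Complex.exp ((↑(Real.pi * (k:ℝ) * l) : ℂ) * Complex.I) *
      Complex.exp ((↑(2 * Real.pi * (k:ℝ) * ξ) : ℂ) * Complex.I) *
      weylKernel 1 φ (ξ + l) η := by
  unfold weylKernel
  rw [← MeasureTheory.integral_add_right_eq_self
    (fun x : ℝ => twistedTranslate 1 k l φ (x, η - ξ) *
      Complex.exp ((↑(Real.pi * 1 * x * (η + ξ)) : ℂ) * Complex.I)) (k:ℝ)]
  rw [← integral_const_mul]
  apply integral_congr_ae
  filter_upwards with x
  simp only [twistedTranslate]
  have h1 : x + (k:ℝ) - k = x := by ring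
  have h2 : η - ξ - (l:ℝ) = η - (ξ + l) := by ring
  rw [h1, h2]
  rw [show Real.pi * 1 * ((x + (k:ℝ)) * l - (η - ξ) * k) =
    (Real.pi * (k:ℝ) * l + 2 * Real.pi * (k:ℝ) * ξ) +
      (Real.pi * 1 * x * (η + (ξ + l)) - Real.pi * 1 * (x + (k:ℝ)) * (η + ξ)) by ring]
  rw [exp_I_add, exp_I_add,
    show (Real.pi * 1 * x * (η + (ξ + l)) - Real.pi * 1 * (x + (k:ℝ)) * (η + ξ)) =
      Real.pi * 1 * x * (η + (ξ + l)) + -(Real.pi * 1 * (x + (k:ℝ)) * (η + ξ)) by ring,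
    exp_I_add]
  have hneg : Complex.exp ((↑(-(Real.pi * 1 * (x + (k:ℝ)) * (η + ξ))) : ℂ) * I) *
      Complex.exp ((↑(Real.pi * 1 * (x + (k:ℝ)) * (η + ξ)) : ℂ) * I) = 1 := by
    rw [← Complex.exp_add]; push_cast; ring_nf; exact Complex.exp_zero
  linear_combination (Complex.exp ((↑(Real.pi * (k:ℝ) * l) : ℂ) * I) *
    Complex.exp ((↑(2 * Real.pi * (k:ℝ) * ξ) : ℂ) * I) *
    Complex.exp ((↑(Real.pi * 1 * x * (η + (ξ + l))) : ℂ) * I) *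
    φ (x, η - (ξ + l))) * hneg

/-- For `φ ∈ L¹(ℝ²) ∩ L²(ℝ²)` and `k, l ∈ ℤ`, for a.e. `ξ, ξ' ∈ [0,1)` and
`η ∈ ℝ`, `Z_W(T^t_{(k,l)} φ)(ξ, ξ', η) = e^{2πi(kξ + lξ')} e^{πikl} Z_W φ(ξ, ξ', η)`. -/
theorem statement_17 (φ : ℝ × ℝ → ℂ) (hφ1 : Integrable φ (volume : Measure (ℝ × ℝ)))
    (hφ2 : MemLp φ 2 (volume : Measure (ℝ × ℝ))) (k l : ℤ) :
    ∀ᵐ p : ℝ × ℝ × ℝ, p.1 ∈ Set.Ico (0 : ℝ) 1 → p.2.1 ∈ Set.Ico (0 : ℝ) 1 →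
      weylZak (twistedTranslate 1 k l φ) p.1 p.2.1 p.2.2 =
        Complex.exp ((↑(2 * Real.pi * ((k : ℝ) * p.1 + (l : ℝ) * p.2.1)) : ℂ) * Complex.I) *
          Complex.exp ((↑(Real.pi * (k : ℝ) * l) : ℂ) * Complex.I) *
          weylZak φ p.1 p.2.1 p.2.2 := by
  filter_upwards with p _ _
  obtain ⟨ξ, ξ', η⟩ := p
  simp only
  unfold weylZak
  rw [mul_assoc, ← tsum_mul_left, ← tsum_mul_left]
  have shift := (Equiv.addRight l).tsum_eq (fun m : ℤ =>
    Complex.exp ((↑(2 * Real.pi * ((k : ℝ) * ξ + (l : ℝ) * ξ')) : ℂ) * Complex.I) *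
      (Complex.exp ((↑(Real.pi * (k : ℝ) * l) : ℂ) * Complex.I) *
        (weylKernel 1 φ ((m:ℝ) + ξ) η *
          Complex.exp (-(↑(2 * Real.pi * (m : ℝ) * ξ') : ℂ) * Complex.I))))
  simp only [Equiv.coe_addRight] at shift
  rw [← shift]
  refine tsum_congr fun m => ?_
  rw [kernel_twist]
  have hK : weylKernel 1 φ ((m:ℝ) + ξ + l) η = weylKernel 1 φ ((↑(m + l):ℝ) + ξ) η := by
    congr 1; push_cast; ring
  rw [hK]
  have := exp3_helper (Real.pi * (k:ℝ) * l) (2 * Real.pi * (k:ℝ) * ((m:ℝ) + ξ))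
    (2 * Real.pi * (m : ℝ) * ξ')
    (2 * Real.pi * ((k : ℝ) * ξ + (l : ℝ) * ξ')) (Real.pi * (k:ℝ) * l)
    (2 * Real.pi * ((↑(m + l) : ℝ)) * ξ') (k * m)
    (by push_cast; ring) (weylKernel 1 φ ((↑(m + l):ℝ) + ξ) η)
  calc Complex.exp ((↑(Real.pi * (k:ℝ) * l) : ℂ) * Complex.I) *
        Complex.exp ((↑(2 * Real.pi * (k:ℝ) * ((m:ℝ) + ξ)) : ℂ) * Complex.I) *
        weylKernel 1 φ ((↑(m + l):ℝ) + ξ) η *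
        Complex.exp (-(↑(2 * Real.pi * (m : ℝ) * ξ') : ℂ) * Complex.I)
      = Complex.exp ((↑(2 * Real.pi * ((k : ℝ) * ξ + (l : ℝ) * ξ')) : ℂ) * Complex.I) *
        Complex.exp ((↑(Real.pi * (k:ℝ) * l) : ℂ) * Complex.I) *
        (weylKernel 1 φ ((↑(m + l):ℝ) + ξ) η *
          Complex.exp (-(↑(2 * Real.pi * ((↑(m + l) : ℝ)) * ξ') : ℂ) * Complex.I)) := this
    _ = _ := by ring
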